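/- Let u, v : ℝ → ℝ be C² with v > 0 and u'² + v'² = v² everywhere, and let κ : ℝ → ℝ satisfy u'' = −v'κ + 2u'v'/v and v'' = u'κ − (u'² − v'²)/v. Let φ : ℝ² → ℝ be such that x ↦ φ(x,y₀) is differentiable, and fix (x₀, y₀) ∈ ℝ². Define E : ℝ → ℝ by E(t) = [ (u'(x₀) − t·A)² + (v'(x₀) + t·B)² ] / (v(x₀) + t·u'(x₀)·φ(x₀,y₀))², where A = v''(x₀)·φ(x₀,y₀) + v'(x₀)·∂φ/∂x(x₀,y₀) and B = u''(x₀)·φ(x₀,y₀) + u'(x₀)·∂φ/∂x(x₀,y₀). Then, writing φ = φ(x₀,y₀), φ_x = ∂φ/∂x(x₀,y₀), and evaluating u', v', v, κ at x₀: E''(0) = 2·[ φ_x² + κ²φ² + (v'²/v²)·φ² + (2/v)·(κ·u'·φ² + v'·φ·φ_x) ]. -/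

import Mathlib

lemma second_deriv_aux (p q c d A B : ℝ) (hc : c ≠ 0) :
    deriv (deriv (fun t : ℝ => ((p - t * A) ^ 2 + (q + t * B) ^ 2) / (c + t * d) ^ 2)) 0
      = 2 * (A ^ 2 + B ^ 2) / c ^ 2 - 8 * d * (q * B - p * A) / c ^ 3
        + 6 * d ^ 2 * (p ^ 2 + q ^ 2) / c ^ 4 := by
  have h1 : ∀ t : ℝ, HasDerivAt (fun s : ℝ => p - s * A) (-A) t := by
    intro t
    simpa using (((hasDerivAt_id t).mul_const A).const_sub p)
  have h2 : ∀ t : ℝ, HasDerivAt (fun s : ℝ => q + s * B) B t := by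
    intro t
    simpa using (((hasDerivAt_id t).mul_const B).const_add q)
  have h3 : ∀ t : ℝ, HasDerivAt (fun s : ℝ => c + s * d) d t := by
    intro t
    simpa using (((hasDerivAt_id t).mul_const d).const_add c)
  have hN : ∀ t : ℝ, HasDerivAt (fun s : ℝ => (p - s * A) ^ 2 + (q + s * B) ^ 2)
      (2 * (p - t * A) * (-A) + 2 * (q + t * B) * B) t := by
    intro t
    have := ((h1 t).fun_pow 2).add ((h2 t).fun_pow 2)
    exact this.congr_deriv (by push_cast; ring)
  have hD : ∀ t : ℝ, HasDerivAt (fun s : ℝ => (c + s * d) ^ 2) (2 * (c + t * d) * d) t := by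
    intro t
    have := (h3 t).fun_pow 2
    exact this.congr_deriv (by push_cast; ring)
  set G : ℝ → ℝ := fun t =>
    ((2 * (p - t * A) * (-A) + 2 * (q + t * B) * B) * (c + t * d) ^ 2
      - ((p - t * A) ^ 2 + (q + t * B) ^ 2) * (2 * (c + t * d) * d)) / ((c + t * d) ^ 2) ^ 2
    with hG_def
  have key : ∀ t : ℝ, c + t * d ≠ 0 →
      HasDerivAt (fun s : ℝ => ((p - s * A) ^ 2 + (q + s * B) ^ 2) / (c + s * d) ^ 2) (G t) t := by
    intro t ht
    exact (hN t).div (hD t) (pow_ne_zero 2 ht)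
  have hS : ∀ᶠ t in nhds (0 : ℝ), c + t * d ≠ 0 := by
    have hcont : ContinuousAt (fun t : ℝ => c + t * d) 0 := by fun_prop
    have h0 : c + (0 : ℝ) * d ≠ 0 := by simpa using hc
    exact hcont.eventually_ne h0
  have heq : deriv (fun s : ℝ => ((p - s * A) ^ 2 + (q + s * B) ^ 2) / (c + s * d) ^ 2)
      =ᶠ[nhds (0 : ℝ)] G := hS.mono fun t ht => (key t ht).deriv
  rw [heq.deriv_eq]
  -- now compute deriv G 0
  have h0 : c + (0 : ℝ) * d ≠ 0 := by simpa using hc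
  have hNN : HasDerivAt (fun t : ℝ => 2 * (p - t * A) * (-A) + 2 * (q + t * B) * B)
      (2 * (-A) * (-A) + 2 * B * B) 0 := by
    have e1 : HasDerivAt (fun t : ℝ => 2 * (p - t * A) * (-A)) (2 * (-A) * (-A)) 0 := by
      have := ((h1 0).const_mul 2).mul_const (-A)
      convert this using 1
      all_goals ring
    have e2 : HasDerivAt (fun t : ℝ => 2 * (q + t * B) * B) (2 * B * B) 0 := by
      have := ((h2 0).const_mul 2).mul_const B
      convert this using 1
      all_goals ring
    exact e1.add e2
  have hDD : HasDerivAt (fun t : ℝ => 2 * (c + t * d) * d) (2 * d * d) 0 := by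
    have := ((h3 0).const_mul 2).mul_const d
    convert this using 1
    all_goals ring
  have hM : HasDerivAt (fun t : ℝ =>
      (2 * (p - t * A) * (-A) + 2 * (q + t * B) * B) * (c + t * d) ^ 2
        - ((p - t * A) ^ 2 + (q + t * B) ^ 2) * (2 * (c + t * d) * d))
      ((2 * (-A) * (-A) + 2 * B * B) * (c + 0 * d) ^ 2
        + (2 * (p - 0 * A) * (-A) + 2 * (q + 0 * B) * B) * (2 * (c + 0 * d) * d)
        - ((2 * (p - 0 * A) * (-A) + 2 * (q + 0 * B) * B) * (2 * (c + 0 * d) * d)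
          + ((p - 0 * A) ^ 2 + (q + 0 * B) ^ 2) * (2 * d * d))) 0 :=
    (hNN.mul (hD 0)).sub ((hN 0).mul hDD)
  have hD2 : HasDerivAt (fun t : ℝ => ((c + t * d) ^ 2) ^ 2)
      (2 * ((c + 0 * d) ^ 2) ^ 1 * (2 * (c + 0 * d) * d)) 0 := by
    have := (hD 0).fun_pow 2
    exact this.congr_deriv (by push_cast; ring)
  have hGd : HasDerivAt G _ 0 :=
    hM.div hD2 (pow_ne_zero 2 (pow_ne_zero 2 h0))
  rw [hGd.deriv]
  have hc' : c + 0 * d = c := by ring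
  rw [hc']
  field_simp
  ring

/-- For the normal variation of the profile curve, the dx⊗dx
metric coefficient E(t) has second derivative at t = 0 equal to
2·[φ_x² + κ²φ² + (v'²/v²)φ² + (2/v)(κu'φ² + v'φφ_x)]. -/
theorem metric_coefficient_second_order
    (u v κ : ℝ → ℝ) (φ : ℝ → ℝ → ℝ) (x₀ y₀ : ℝ)
    (hu : ContDiff ℝ 2 u) (hv : ContDiff ℝ 2 v)
    (hvpos : ∀ x, 0 < v x)
    (harc : ∀ x, (deriv u x) ^ 2 + (deriv v x) ^ 2 = (v x) ^ 2)
    (hu'' : ∀ x, deriv (deriv u) x = -(deriv v x) * κ x + 2 * deriv u x * deriv v x / v x)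
    (hv'' : ∀ x, deriv (deriv v) x =
      deriv u x * κ x - ((deriv u x) ^ 2 - (deriv v x) ^ 2) / v x)
    (hφ : Differentiable ℝ (fun x => φ x y₀))
    (A B : ℝ)
    (hA : A = deriv (deriv v) x₀ * φ x₀ y₀ + deriv v x₀ * deriv (fun x => φ x y₀) x₀)
    (hB : B = deriv (deriv u) x₀ * φ x₀ y₀ + deriv u x₀ * deriv (fun x => φ x y₀) x₀)
    (E : ℝ → ℝ)
    (hE : ∀ t, E t = ((deriv u x₀ - t * A) ^ 2 + (deriv v x₀ + t * B) ^ 2)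
        / (v x₀ + t * deriv u x₀ * φ x₀ y₀) ^ 2) :
    deriv (deriv E) 0 =
      2 * ((deriv (fun x => φ x y₀) x₀) ^ 2
        + (κ x₀) ^ 2 * (φ x₀ y₀) ^ 2
        + ((deriv v x₀) ^ 2 / (v x₀) ^ 2) * (φ x₀ y₀) ^ 2
        + (2 / v x₀) * (κ x₀ * deriv u x₀ * (φ x₀ y₀) ^ 2
            + deriv v x₀ * φ x₀ y₀ * deriv (fun x => φ x y₀) x₀)) := by
  have hc : v x₀ ≠ 0 := (hvpos x₀).ne'
  have hEfun : E = fun t : ℝ =>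
      ((deriv u x₀ - t * A) ^ 2 + (deriv v x₀ + t * B) ^ 2)
        / (v x₀ + t * (deriv u x₀ * φ x₀ y₀)) ^ 2 := by
    funext t
    rw [hE t]
    ring_nf
  rw [hEfun, second_deriv_aux (deriv u x₀) (deriv v x₀) (v x₀)
    (deriv u x₀ * φ x₀ y₀) A B hc]
  rw [hA, hB, hu'' x₀, hv'' x₀]
  set p := deriv u x₀
  set q := deriv v x₀
  set c := v x₀
  set k := κ x₀
  set h := φ x₀ y₀
  set f := deriv (fun x => φ x y₀) x₀
  have harc' : p ^ 2 + q ^ 2 = c ^ 2 := harc x₀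
  field_simp
  linear_combination ((2*c^2*f^2 + 2*c^2*k^2*h^2 + 4*q*c*h*f + 2*q^2*h^2 + 4*p*c*k*h^2)) * harc'
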